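/- For every cycle-free formula φ of the counting tree logic and every finite binary tree T such that the interpretation ⟦φ⟧_∅^T is nonempty, there exists a finite unfolding φ' of the fixpoint subformulas of φ such that the interpretation of φ' with every remaining fixpoint subformula μx.ψ replaced by ¬⊤ equals the interpretation of φ, i.e. ⟦φ'{μx.ψ ↦ ¬⊤}⟧_∅^T = ⟦φ⟧_∅^T. -/

import Mathlib

set_option linter.unusedVariables false

/-! ## Modalities, trails, formulas of the counting tree logic -/

/-- The four modalities: first child, next sibling, and their converses. -/
inductive Modality : Type
  | down | right | up | left
deriving DecidableEq

/-- Converse modality. -/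
def Modality.conv : Modality → Modality
  | .down => .up
  | .up => .down
  | .right => .left
  | .left => .right

/-- Trails: regular expressions over modalities. -/
inductive Trail : Type
  | mod : Modality → Trail
  | seq : Trail → Trail → Trail
  | alt : Trail → Trail → Trail
  | star : Trail → Trail

/-- Syntactic interpretation of trails: sets of sequences of modalities. -/
def Trail.lang : Trail → Set (List Modality)
  | .mod m => {[m]}
  | .seq α β => {l | ∃ l₁ ∈ α.lang, ∃ l₂ ∈ β.lang, l = l₁ ++ l₂}
  | .alt α β => α.lang ∪ β.lang
  | .star α => {l | ∃ ls : List (List Modality), (∀ x ∈ ls, x ∈ α.lang) ∧ l = ls.flatten}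

/-- Formulas of the counting tree logic, in negation normal form, with de Bruijn
recursion variables.  Each counting formula `α⟨ψ⟩>k` / `α⟨ψ⟩≤k` is annotated by
a counting proposition `c`. -/
inductive Formula (P : Type) : Type
  | tt
  | ff
  | prop (p : P)
  | nprop (p : P)
  | var (x : ℕ)
  | or (φ₁ φ₂ : Formula P)
  | and (φ₁ φ₂ : Formula P)
  | dia (m : Modality) (φ : Formula P)
  | ndia (m : Modality)
  | gt (c : P) (α : Trail) (ψ : Formula P) (k : ℕ)
  | le (c : P) (α : Trail) (ψ : Formula P) (k : ℕ)
  | mu (ψ : Formula P)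

namespace Formula

variable {P : Type}

/-- Lift (shift) de Bruijn variables `≥ d`. -/
def lift (d : ℕ) : Formula P → Formula P
  | .tt => .tt
  | .ff => .ff
  | .prop p => .prop p
  | .nprop p => .nprop p
  | .var x => if x < d then .var x else .var (x + 1)
  | .or a b => .or (a.lift d) (b.lift d)
  | .and a b => .and (a.lift d) (b.lift d)
  | .dia m ψ => .dia m (ψ.lift d)
  | .ndia m => .ndia m
  | .gt c α ψ k => .gt c α (ψ.lift d) k
  | .le c α ψ k => .le c α (ψ.lift d) k
  | .mu ψ => .mu (ψ.lift (d + 1))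

/-- Substitution of a formula for the de Bruijn variable `d`. -/
def subst : Formula P → ℕ → Formula P → Formula P
  | .tt, _, _ => .tt
  | .ff, _, _ => .ff
  | .prop p, _, _ => .prop p
  | .nprop p, _, _ => .nprop p
  | .var x, d, σ => if x = d then σ else if d < x then .var (x - 1) else .var x
  | .or a b, d, σ => .or (a.subst d σ) (b.subst d σ)
  | .and a b, d, σ => .and (a.subst d σ) (b.subst d σ)
  | .dia m ψ, d, σ => .dia m (ψ.subst d σ)
  | .ndia m, _, _ => .ndia m
  | .gt c α ψ k, d, σ => .gt c α (ψ.subst d σ) k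
  | .le c α ψ k, d, σ => .le c α (ψ.subst d σ) k
  | .mu ψ, d, σ => .mu (ψ.subst (d + 1) (σ.lift 0))

/-- One-step unfolding of a fixpoint body: `ψ{μx.ψ / x}`. -/
def unfold (ψ : Formula P) : Formula P := ψ.subst 0 (.mu ψ)

/-- Negation normal form negation (Figure 3 of the paper). -/
def neg : Formula P → Formula P
  | .tt => .ff
  | .ff => .tt
  | .prop p => .nprop p
  | .nprop p => .prop p
  | .var x => .var x
  | .or a b => .and a.neg b.neg
  | .and a b => .or a.neg b.neg
  | .dia m ψ => .or (.ndia m) (.dia m ψ.neg)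
  | .ndia m => .dia m .tt
  | .gt c α ψ k => .le c α ψ k
  | .le c α ψ k => .gt c α ψ k
  | .mu ψ => .mu ψ.neg

/-- A formula with no counting subformula. -/
def NoCount : Formula P → Prop
  | .gt _ _ _ _ => False
  | .le _ _ _ _ => False
  | .or a b => NoCount a ∧ NoCount b
  | .and a b => NoCount a ∧ NoCount b
  | .dia _ ψ => NoCount ψ
  | .mu ψ => NoCount ψ
  | _ => True

end Formula

/-! ## Finite binary trees (Kripke-style) -/

/-- A finite binary tree: a finite set of nodes, a partial transition map on
modalities forming a tree structure, and a labeling of nodes by propositions. -/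
structure CTree (P : Type) where
  N : Type
  fin : Finite N
  R : N → Modality → Option N
  label : N → P
  conv_down : ∀ a b : N, R a .down = some b ↔ R b .up = some a
  conv_right : ∀ a b : N, R a .right = some b ↔ R b .left = some a
  one_parent : ∀ a : N, R a .up = none ∨ R a .left = none
  rooted : ∃ r : N, ∀ a : N,
    Relation.ReflTransGen (fun x y => R x .up = some y ∨ R x .left = some y) a r
  wf : WellFounded (fun a b : N => R b .down = some a ∨ R b .right = some a)

/-- Follow a sequence of modalities in a tree. -/
def CTree.follow {P : Type} (T : CTree P) : T.N → List Modality → Option T.N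
  | n, [] => some n
  | n, m :: l =>
    match T.R n m with
    | none => none
    | some n' => T.follow n' l

/-- There is a trail `α` from `a` to `b`. -/
def CTree.reach {P : Type} (T : CTree P) (α : Trail) (a b : T.N) : Prop :=
  ∃ l ∈ α.lang, T.follow a l = some b

/-! ## Semantics of formulas (Figure 4) -/

/-- Semantics of formulas: sets of nodes of a tree, under a valuation of the
recursion variables. -/
noncomputable def sem {P : Type} (T : CTree P) : Formula P → (ℕ → Set T.N) → Set T.N
  | .tt, _ => Set.univ
  | .ff, _ => ∅
  | .prop p, _ => {n | T.label n = p}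
  | .nprop p, _ => {n | T.label n ≠ p}
  | .var x, V => V x
  | .or a b, V => sem T a V ∪ sem T b V
  | .and a b, V => sem T a V ∩ sem T b V
  | .dia m ψ, V => {n | ∃ n', T.R n m = some n' ∧ n' ∈ sem T ψ V}
  | .ndia m, _ => {n | T.R n m = none}
  | .gt _ α ψ k, V => {n | k < {n' | n' ∈ sem T ψ V ∧ T.reach α n n'}.ncard}
  | .le _ α ψ k, V => {n | {n' | n' ∈ sem T ψ V ∧ T.reach α n n'}.ncard ≤ k}
  | .mu ψ, V =>
      ⋂₀ {S : Set T.N | sem T ψ (fun i => match i with | 0 => S | j + 1 => V j) ⊆ S}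

/-- The empty valuation. -/
def emptyVal {P : Type} (T : CTree P) : ℕ → Set T.N := fun _ => ∅

/-! ## Cycle-freeness and finite unfolding -/

/-- Modalities occurring in a trail. -/
def Trail.mods : Trail → Set Modality
  | .mod m => {m}
  | .seq α β => α.mods ∪ β.mods
  | .alt α β => α.mods ∪ β.mods
  | .star α => α.mods

/-- For a free de Bruijn variable `x`, the possible sets of modalities crossed
between the current point and an occurrence of `x`. -/
def Formula.occMods {P : Type} : Formula P → ℕ → Set (Set Modality)
  | .var y, x => if y = x then {∅} else ∅
  | .or a b, x => a.occMods x ∪ b.occMods x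
  | .and a b, x => a.occMods x ∪ b.occMods x
  | .dia m ψ, x => (insert m) '' ψ.occMods x
  | .gt _ α ψ _, x => (fun s => α.mods ∪ s) '' ψ.occMods x
  | .le _ α ψ _, x => (fun s => α.mods ∪ s) '' ψ.occMods x
  | .mu ψ, x => ψ.occMods (x + 1)
  | _, _ => ∅

/-- Cycle-free formulas: no fixpoint variable occurs in the scope of both a
modality and its converse, and counting formulas occur neither under fixpoints
nor under other counting formulas. -/
def Formula.CycleFree {P : Type} : Formula P → Prop
  | .mu ψ => (∀ s ∈ ψ.occMods 0, ∀ m : Modality, ¬(m ∈ s ∧ m.conv ∈ s)) ∧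
      Formula.NoCount ψ ∧ Formula.CycleFree ψ
  | .or a b => Formula.CycleFree a ∧ Formula.CycleFree b
  | .and a b => Formula.CycleFree a ∧ Formula.CycleFree b
  | .dia _ ψ => Formula.CycleFree ψ
  | .gt _ _ ψ _ => Formula.NoCount ψ ∧ Formula.CycleFree ψ
  | .le _ _ ψ _ => Formula.NoCount ψ ∧ Formula.CycleFree ψ
  | _ => True


/-- `Unfolding φ φ'` : `φ'` is a finite unfolding of the fixpoints of `φ`. -/
inductive Unfolding {P : Type} : Formula P → Formula P → Prop
  | refl (φ : Formula P) : Unfolding φ φ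
  | mu {ψ φ'} : Unfolding (Formula.subst ψ 0 (.mu ψ)) φ' → Unfolding (.mu ψ) φ'
  | or {a a' b b'} : Unfolding a a' → Unfolding b b' → Unfolding (.or a b) (.or a' b')
  | and {a a' b b'} : Unfolding a a' → Unfolding b b' → Unfolding (.and a b) (.and a' b')
  | dia {m ψ ψ'} : Unfolding ψ ψ' → Unfolding (.dia m ψ) (.dia m ψ')
  | gt {c α ψ ψ' k} : Unfolding ψ ψ' → Unfolding (.gt c α ψ k) (.gt c α ψ' k)
  | le {c α ψ ψ' k} : Unfolding ψ ψ' → Unfolding (.le c α ψ k) (.le c α ψ' k)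

/-- Replace every remaining fixpoint subformula `μx.ψ` by `¬⊤`. -/
def Formula.killMu {P : Type} : Formula P → Formula P
  | .mu _ => .ff
  | .or a b => .or a.killMu b.killMu
  | .and a b => .and a.killMu b.killMu
  | .dia m ψ => .dia m ψ.killMu
  | .gt c α ψ k => .gt c α ψ.killMu k
  | .le c α ψ k => .le c α ψ.killMu k
  | φ => φ

/-! ## Auxiliary lemmas -/

namespace Formula

variable {P : Type}

lemma lift_lift (σ : Formula P) : ∀ d e : ℕ, e ≤ d →
    (σ.lift d).lift e = (σ.lift e).lift (d+1) := by
  induction σ with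
  | var x =>
    intro d e h
    simp only [lift]
    split_ifs <;> simp only [lift] <;> split_ifs <;> first | rfl | omega
  | or a b iha ihb => intro d e h; simp [lift, iha _ _ h, ihb _ _ h]
  | and a b iha ihb => intro d e h; simp [lift, iha _ _ h, ihb _ _ h]
  | dia m ψ ih => intro d e h; simp [lift, ih _ _ h]
  | gt c α ψ k ih => intro d e h; simp [lift, ih _ _ h]
  | le c α ψ k ih => intro d e h; simp [lift, ih _ _ h]
  | mu ψ ih => intro d e h; simp [lift, ih (d+1) (e+1) (by omega)]
  | _ => intros; rfl

lemma subst_lift_cancel (σ : Formula P) : ∀ (d : ℕ) (τ : Formula P),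
    (σ.lift d).subst d τ = σ := by
  induction σ with
  | var x =>
    intro d τ
    simp only [lift]
    split_ifs <;> simp only [subst] <;> split_ifs <;> first | rfl | omega
  | or a b iha ihb => intro d τ; simp [lift, subst, iha, ihb]
  | and a b iha ihb => intro d τ; simp [lift, subst, iha, ihb]
  | dia m ψ ih => intro d τ; simp [lift, subst, ih]
  | gt c α ψ k ih => intro d τ; simp [lift, subst, ih]
  | le c α ψ k ih => intro d τ; simp [lift, subst, ih]
  | mu ψ ih => intro d τ; simp [lift, subst, ih]
  | _ => intros; rfl

lemma lift_subst (ρ : Formula P) : ∀ (d e : ℕ) (τ : Formula P), e ≤ d →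
    (ρ.lift e).subst (d+1) (τ.lift e) = (ρ.subst d τ).lift e := by
  induction ρ with
  | var x =>
    intro d e τ h
    simp only [lift]
    split_ifs <;> (try simp only [subst, lift]) <;> (try split_ifs) <;>
      (try simp only [subst, lift]) <;> (try split_ifs) <;>
      first | rfl | omega | (congr 1; omega)
  | or a b iha ihb => intro d e τ h; simp [lift, subst, iha _ _ _ h, ihb _ _ _ h]
  | and a b iha ihb => intro d e τ h; simp [lift, subst, iha _ _ _ h, ihb _ _ _ h]
  | dia m ψ ih => intro d e τ h; simp [lift, subst, ih _ _ _ h]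
  | gt c α ψ k ih => intro d e τ h; simp [lift, subst, ih _ _ _ h]
  | le c α ψ k ih => intro d e τ h; simp [lift, subst, ih _ _ _ h]
  | mu ψ ih =>
    intro d e τ h
    simp only [lift, subst]
    rw [lift_lift τ e 0 (by omega), ih (d+1) (e+1) (τ.lift 0) (by omega)]
  | _ => intros; rfl

lemma subst_subst (b : Formula P) : ∀ (i j : ℕ) (ρ σ : Formula P),
    (b.subst i ρ).subst (i+j) σ
      = (b.subst (i+j+1) (σ.lift i)).subst i (ρ.subst (i+j) σ) := by
  induction b with
  | var x =>
    intro i j ρ σ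
    simp only [subst]
    split_ifs <;> (try simp only [subst]) <;> (try split_ifs) <;>
      first | rfl | omega | (congr 1; omega) | (rw [subst_lift_cancel])
  | or a b iha ihb => intro i j ρ σ; simp [subst, iha, ihb]
  | and a b iha ihb => intro i j ρ σ; simp [subst, iha, ihb]
  | dia m ψ ih => intro i j ρ σ; simp [subst, ih]
  | gt c α ψ k ih => intro i j ρ σ; simp [subst, ih]
  | le c α ψ k ih => intro i j ρ σ; simp [subst, ih]
  | mu ψ ih =>
    intro i j ρ σ
    simp only [subst]
    have := ih (i+1) j (ρ.lift 0) (σ.lift 0)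
    rw [show i+1+j = i+j+1 by omega] at this
    rw [this, lift_lift σ i 0 (by omega), lift_subst ρ (i+j) 0 σ (by omega)]
  | _ => intros; rfl

end Formula

namespace Formula

variable {P : Type}

/-- Substitute `σ'` for occurrences of the variable not under a `μ`-binder,
and `σ` (the usual way) for occurrences under `μ`-binders. -/
def subst2 : Formula P → ℕ → Formula P → Formula P → Formula P
  | .tt, _, _, _ => .tt
  | .ff, _, _, _ => .ff
  | .prop p, _, _, _ => .prop p
  | .nprop p, _, _, _ => .nprop p
  | .var x, d, _, σ' => if x = d then σ' else if d < x then .var (x - 1) else .var x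
  | .or a b, d, σ, σ' => .or (subst2 a d σ σ') (subst2 b d σ σ')
  | .and a b, d, σ, σ' => .and (subst2 a d σ σ') (subst2 b d σ σ')
  | .dia m ψ, d, σ, σ' => .dia m (subst2 ψ d σ σ')
  | .ndia m, _, _, _ => .ndia m
  | .gt c α ψ k, d, σ, σ' => .gt c α (subst2 ψ d σ σ') k
  | .le c α ψ k, d, σ, σ' => .le c α (subst2 ψ d σ σ') k
  | .mu ψ, d, σ, _ => .mu (ψ.subst (d + 1) (σ.lift 0))

/-- Formulas without fixpoints. -/
def MuFree : Formula P → Prop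
  | .mu _ => False
  | .or a b => MuFree a ∧ MuFree b
  | .and a b => MuFree a ∧ MuFree b
  | .dia _ ψ => MuFree ψ
  | .gt _ _ ψ _ => MuFree ψ
  | .le _ _ ψ _ => MuFree ψ
  | _ => True

lemma muFree_killMu (a : Formula P) : MuFree a.killMu := by
  induction a <;> simp [killMu, MuFree, *]

lemma killMu_subst2 (a : Formula P) : ∀ (d : ℕ) (σ σ' : Formula P),
    (subst2 a d σ σ').killMu = a.killMu.subst d σ'.killMu := by
  induction a <;> intro d σ σ' <;>
    simp only [subst2, killMu, subst, *]
  split_ifs <;> simp [killMu]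

end Formula

namespace Unfolding

variable {P : Type}

lemma trans {a b c : Formula P} (h1 : Unfolding a b) (h2 : Unfolding b c) :
    Unfolding a c := by
  induction h1 generalizing c with
  | refl => exact h2
  | mu h ih => exact .mu (ih h2)
  | or h1 h2 ih1 ih2 =>
    cases h2 with
    | refl => exact .or (by assumption) (by assumption)
    | or g1 g2 => exact .or (ih1 g1) (ih2 g2)
  | and h1 h2 ih1 ih2 =>
    cases h2 with
    | refl => exact .and (by assumption) (by assumption)
    | and g1 g2 => exact .and (ih1 g1) (ih2 g2)
  | dia h ih =>
    cases h2 with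
    | refl => exact .dia (by assumption)
    | dia g => exact .dia (ih g)
  | gt h ih =>
    cases h2 with
    | refl => exact .gt (by assumption)
    | gt g => exact .gt (ih g)
  | le h ih =>
    cases h2 with
    | refl => exact .le (by assumption)
    | le g => exact .le (ih g)

lemma subst_left {a a' : Formula P} (h : Unfolding a a') :
    ∀ (d : ℕ) (σ : Formula P), Unfolding (a.subst d σ) (a'.subst d σ) := by
  induction h with
  | refl => intro d σ; exact .refl _
  | @mu ψ φ' h ih =>
    intro d σ
    simp only [Formula.subst]
    apply Unfolding.mu
    have := Formula.subst_subst ψ 0 d (.mu ψ) σ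
    simp only [Nat.zero_add] at this
    rw [show (ψ.subst (d+1) (Formula.lift 0 σ)).mu = ψ.mu.subst d σ from rfl, ← this]
    exact ih d σ
  | or h1 h2 ih1 ih2 => intro d σ; exact .or (ih1 d σ) (ih2 d σ)
  | and h1 h2 ih1 ih2 => intro d σ; exact .and (ih1 d σ) (ih2 d σ)
  | dia h ih => intro d σ; exact .dia (ih d σ)
  | gt h ih => intro d σ; exact .gt (ih d σ)
  | le h ih => intro d σ; exact .le (ih d σ)

lemma subst2_right (a : Formula P) {σ σ' : Formula P} (h : Unfolding σ σ') :
    ∀ d : ℕ, Unfolding (a.subst d σ) (Formula.subst2 a d σ σ') := by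
  induction a with
  | var x =>
    intro d
    simp only [Formula.subst, Formula.subst2]
    split_ifs <;> first | exact h | exact .refl _
  | or a b iha ihb => intro d; exact .or (iha d) (ihb d)
  | and a b iha ihb => intro d; exact .and (iha d) (ihb d)
  | dia m ψ ih => intro d; exact .dia (ih d)
  | gt c α ψ k ih => intro d; exact .gt (ih d)
  | le c α ψ k ih => intro d; exact .le (ih d)
  | mu ψ => intro d; exact .refl _
  | _ => intro d; exact .refl _

end Unfolding

/-- Prepend a set to a valuation. -/
def consVal {P : Type} (T : CTree P) (S : Set T.N) (V : ℕ → Set T.N) :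
    ℕ → Set T.N := fun i => match i with | 0 => S | j + 1 => V j

lemma sem_mu {P : Type} (T : CTree P) (ψ : Formula P) (V : ℕ → Set T.N) :
    sem T (.mu ψ) V = ⋂₀ {S : Set T.N | sem T ψ (consVal T S V) ⊆ S} := rfl

/-- Semantics of substitution at level 0, for fixpoint-free formulas. -/
lemma sem_subst0 {P : Type} (T : CTree P) (a : Formula P) (ha : a.MuFree) :
    ∀ (σ : Formula P) (V : ℕ → Set T.N),
      sem T (a.subst 0 σ) V = sem T a (consVal T (sem T σ V) V) := by
  induction a with
  | var x =>
    intro σ V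
    cases x with
    | zero => simp [Formula.subst, sem, consVal]
    | succ y => simp [Formula.subst, sem, consVal]
  | or a b iha ihb =>
    intro σ V
    simp [Formula.subst, sem, iha ha.1, ihb ha.2]
  | and a b iha ihb =>
    intro σ V
    simp [Formula.subst, sem, iha ha.1, ihb ha.2]
  | dia m ψ ih =>
    intro σ V
    simp [Formula.subst, sem, ih ha]
  | gt c α ψ k ih =>
    intro σ V
    simp [Formula.subst, sem, ih ha]
  | le c α ψ k ih =>
    intro σ V
    simp [Formula.subst, sem, ih ha]
  | mu ψ ih => exact absurd ha (by simp [Formula.MuFree])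
  | _ => intro σ V; rfl

/-- Monotonicity of the semantics in the valuation, for counting-free
formulas. -/
lemma sem_mono {P : Type} (T : CTree P) (a : Formula P) (ha : a.NoCount) :
    ∀ V V' : ℕ → Set T.N, (∀ i, V i ⊆ V' i) → sem T a V ⊆ sem T a V' := by
  induction a with
  | var x => intro V V' h; exact h x
  | or a b iha ihb =>
    intro V V' h
    exact Set.union_subset_union (iha ha.1 V V' h) (ihb ha.2 V V' h)
  | and a b iha ihb =>
    intro V V' h
    exact Set.inter_subset_inter (iha ha.1 V V' h) (ihb ha.2 V V' h)
  | dia m ψ ih =>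
    intro V V' h n hn
    obtain ⟨n', hR, hn'⟩ := hn
    exact ⟨n', hR, ih ha V V' h hn'⟩
  | gt c α ψ k ih => exact absurd ha (by simp [Formula.NoCount])
  | le c α ψ k ih => exact absurd ha (by simp [Formula.NoCount])
  | mu ψ ih =>
    intro V V' h
    rw [sem_mu, sem_mu]
    apply Set.sInter_subset_sInter
    intro S hS
    refine Set.Subset.trans ?_ hS
    apply ih ha
    intro i
    cases i with
    | zero => exact Set.Subset.rfl
    | succ j => exact h j
  | _ => intro V V' h; exact Set.Subset.rfl

/-- Main lemma: for every cycle-free formula and every valuation there is a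
finite unfolding whose `killMu` has the same semantics. -/
lemma unfolding_main {P : Type} (T : CTree P) (φ : Formula P) :
    φ.CycleFree → ∀ V : ℕ → Set T.N,
      ∃ φ' : Formula P, Unfolding φ φ' ∧ sem T φ'.killMu V = sem T φ V := by
  induction φ with
  | or a b iha ihb =>
    intro hcf V
    obtain ⟨a', ha1, ha2⟩ := iha hcf.1 V
    obtain ⟨b', hb1, hb2⟩ := ihb hcf.2 V
    exact ⟨.or a' b', .or ha1 hb1, by simp [Formula.killMu, sem, ha2, hb2]⟩
  | and a b iha ihb =>
    intro hcf V
    obtain ⟨a', ha1, ha2⟩ := iha hcf.1 V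
    obtain ⟨b', hb1, hb2⟩ := ihb hcf.2 V
    exact ⟨.and a' b', .and ha1 hb1, by simp [Formula.killMu, sem, ha2, hb2]⟩
  | dia m ψ ih =>
    intro hcf V
    obtain ⟨ψ', h1, h2⟩ := ih hcf V
    exact ⟨.dia m ψ', .dia h1, by simp [Formula.killMu, sem, h2]⟩
  | gt c α ψ k ih =>
    intro hcf V
    obtain ⟨ψ', h1, h2⟩ := ih hcf.2 V
    exact ⟨.gt c α ψ' k, .gt h1, by simp [Formula.killMu, sem, h2]⟩
  | le c α ψ k ih =>
    intro hcf V
    obtain ⟨ψ', h1, h2⟩ := ih hcf.2 V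
    exact ⟨.le c α ψ' k, .le h1, by simp [Formula.killMu, sem, h2]⟩
  | mu ψ ih =>
    intro hcf V
    have hnc : ψ.NoCount := hcf.2.1
    have hcfψ : ψ.CycleFree := hcf.2.2
    set F : Set T.N → Set T.N := fun S => sem T ψ (consVal T S V) with hF
    have hFmono : ∀ S S' : Set T.N, S ⊆ S' → F S ⊆ F S' := by
      intro S S' h
      apply sem_mono T ψ hnc
      intro i
      cases i with
      | zero => exact h
      | succ j => exact Set.Subset.rfl
    -- the approximants
    set approx : ℕ → Set T.N := fun n => F^[n] ∅ with happrox
    have hchain : ∀ n, approx n ⊆ approx (n + 1) := by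
      intro n
      induction n with
      | zero => simp [happrox]
      | succ m ihm =>
        simp only [happrox, Function.iterate_succ_apply'] at *
        exact hFmono _ _ ihm
    have hmono : ∀ m n, m ≤ n → approx m ⊆ approx n := by
      intro m n h
      induction h with
      | refl => exact Set.Subset.rfl
      | step _ ihh => exact Set.Subset.trans ihh (hchain _)
    -- approximants reach a fixed point
    have : ∃ i j, i ≠ j ∧ approx i = approx j := by
      have : Finite T.N := T.fin
      exact Finite.exists_ne_map_eq_of_infinite approx
    obtain ⟨i, j, hij, hijeq⟩ := this
    -- wlog i < j
    obtain ⟨i, j, hlt, heq⟩ : ∃ i j, i < j ∧ approx i = approx j := by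
      rcases lt_or_gt_of_ne hij with h | h
      · exact ⟨i, j, h, hijeq⟩
      · exact ⟨j, i, h, hijeq.symm⟩
    have hfix : F (approx i) = approx i := by
      apply Set.Subset.antisymm
      · have h1 : F (approx i) = approx (i + 1) := by
          simp [happrox, Function.iterate_succ_apply']
        rw [h1, heq]
        exact hmono (i + 1) j hlt
      · exact Set.Subset.trans (hchain i)
          (by simp [happrox, Function.iterate_succ_apply'])
    -- the least fixpoint equals approx i
    have hlfp : sem T (.mu ψ) V = approx i := by
      rw [sem_mu]
      apply Set.Subset.antisymm
      · exact Set.sInter_subset_of_mem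
          (show approx i ∈ {S | sem T ψ (consVal T S V) ⊆ S} from le_of_eq hfix)
      · apply Set.subset_sInter
        intro S hS
        have : ∀ n, approx n ⊆ S := by
          intro n
          induction n with
          | zero => simp [happrox]
          | succ m ihm =>
            have : F (approx m) ⊆ F S := hFmono _ _ ihm
            simp only [happrox, Function.iterate_succ_apply']
            exact Set.Subset.trans this hS
        exact this i
    -- unfoldings computing the approximants
    have key : ∀ n : ℕ, ∃ χ : Formula P,
        Unfolding (.mu ψ) χ ∧ sem T χ.killMu V = approx n := by
      intro n
      induction n with
      | zero =>
        exact ⟨.mu ψ, .refl _, by simp [Formula.killMu, sem, happrox]⟩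
      | succ m ihm =>
        obtain ⟨χ, hχ1, hχ2⟩ := ihm
        obtain ⟨ψ', hψ1, hψ2⟩ := ih hcfψ (consVal T (approx m) V)
        refine ⟨Formula.subst2 ψ' 0 (.mu ψ) χ, ?_, ?_⟩
        · apply Unfolding.mu
          exact Unfolding.trans (Unfolding.subst_left hψ1 0 (.mu ψ))
            (Unfolding.subst2_right ψ' hχ1 0)
        · rw [Formula.killMu_subst2, sem_subst0 T _ (Formula.muFree_killMu ψ'),
            hχ2, hψ2]
          simp [happrox, Function.iterate_succ_apply']
          rfl
    obtain ⟨χ, h1, h2⟩ := key i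
    exact ⟨χ, h1, by rw [h2, hlfp]⟩
  | _ => intro hcf V; exact ⟨_, .refl _, rfl⟩

/-- **Lemma 1** (finite unfolding).  For every cycle-free formula `φ` and every
finite binary tree `T` in which `φ` has a nonempty interpretation, there is a
finite unfolding `φ'` of the fixpoints of `φ` such that replacing the remaining
fixpoint subformulas of `φ'` by `¬⊤` does not change the interpretation. -/
theorem finite_unfolding {P : Type} (φ : Formula P) (T : CTree P)
    (hcf : φ.CycleFree) (hne : sem T φ (emptyVal T) ≠ ∅) :
    ∃ φ' : Formula P, Unfolding φ φ' ∧
      sem T φ'.killMu (emptyVal T) = sem T φ (emptyVal T) := by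
  exact unfolding_main T φ hcf (emptyVal T)
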